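/- arXiv:1612.02986 — 2 statements merged into one kernel-verified Lean document; each statement's English description precedes it below -/
import Mathlib

section
/- Let G be a benzenoid system with a perfect matching, let Q be an induced convex subgraph of R(G) isomorphic to Q_{k,l} with vertices identified with the tuples (b_1,…,b_{k+l}) (b_i ∈ {0,1} for i ≤ k, b_i ∈ {0,1,2} for i > k, two tuples adjacent iff they differ by exactly 1 in exactly one coordinate). Let M be the all-zero vertex and, for each i ∈ {1,…,k+l}, let N^i be the vertex with 1 in position i and 0 elsewhere, and let h_i be the hexagon of G with M ⊕ N^i = E(h_i). Then the hexagons h_1, …, h_{k+l} are pairwise vertex-disjoint. -/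
open scoped symmDiff

namespace GZZ

/-! ### Cells (hexagonal faces) of the hexagonal lattice in "brick wall" coordinates.

A vertex of the hexagonal lattice is a pair `(x, y) : ℤ × ℤ`; horizontal edges join
`(x, y)` and `(x + 1, y)`, and vertical edges join `(x, y)` and `(x, y + 1)` for `x + y` even.
The hexagonal faces of the lattice are indexed by their lower-left vertex `c`
(with `c.1 + c.2` even). -/

abbrev V2 := ℤ × ℤ

/-- The six vertices of the hexagonal face with lower-left corner `c`. -/
def cellVerts (c : V2) : Set V2 :=
  {(c.1, c.2), (c.1 + 1, c.2), (c.1 + 2, c.2),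
   (c.1, c.2 + 1), (c.1 + 1, c.2 + 1), (c.1 + 2, c.2 + 1)}

/-- The six edges of the hexagonal face with lower-left corner `c`. -/
def cellEdges (c : V2) : Set (Sym2 V2) :=
  {s((c.1, c.2), (c.1 + 1, c.2)), s((c.1 + 1, c.2), (c.1 + 2, c.2)),
   s((c.1, c.2 + 1), (c.1 + 1, c.2 + 1)), s((c.1 + 1, c.2 + 1), (c.1 + 2, c.2 + 1)),
   s((c.1, c.2), (c.1, c.2 + 1)), s((c.1 + 2, c.2), (c.1 + 2, c.2 + 1))}

/-- Two hexagonal faces are adjacent when they share an edge. -/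
def cellAdj (c d : V2) : Prop :=
  (d.1 - c.1, d.2 - c.2) ∈ ({(2, 0), (-2, 0), (1, 1), (1, -1), (-1, 1), (-1, -1)} : Set V2)

/-- A set of hexagonal faces is connected (via sharing edges). -/
def CellConnected (S : Set V2) : Prop :=
  ∀ c ∈ S, ∀ d ∈ S, Relation.ReflTransGen (fun a b => a ∈ S ∧ b ∈ S ∧ cellAdj a b) c d

/-- A benzenoid system, given by its (finite, nonempty) set `B` of hexagonal faces:
the faces form a connected set and the complement has no holes (it is connected),
which is exactly the condition that `B` consists of all hexagons lying in the region
bounded by a cycle of the hexagonal lattice. -/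
def IsBenzenoid (B : Set V2) : Prop :=
  B.Finite ∧ B.Nonempty ∧ (∀ c ∈ B, Even (c.1 + c.2)) ∧ CellConnected B ∧
    CellConnected {c : V2 | Even (c.1 + c.2) ∧ c ∉ B}

section Generic

/-! ### Perfect matchings, resonance graphs and generalized Clar covers,
generically in a system of hexagonal cells `B` with vertex sets `cv` and edge sets `ce`. -/

variable {V C : Type*} (cv : C → Set V) (ce : C → Set (Sym2 V)) (B : Set C)

/-- The vertices of the system with cell set `B`. -/
def sysVerts : Set V := ⋃ c ∈ B, cv c

/-- The edges of the system with cell set `B`. -/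
def sysEdges : Set (Sym2 V) := ⋃ c ∈ B, ce c

/-- A perfect matching: a set of pairwise non-incident edges of the system
covering all vertices of the system. -/
def IsPM (M : Set (Sym2 V)) : Prop :=
  M ⊆ sysEdges ce B ∧
    (∀ e ∈ M, ∀ f ∈ M, e ≠ f → ∀ v : V, v ∈ e → v ∉ f) ∧
    (∀ v ∈ sysVerts cv B, ∃ e ∈ M, v ∈ e)

/-- The type of perfect matchings of the system. -/
abbrev PM := {M : Set (Sym2 V) // IsPM cv ce B M}

/-- The resonance graph: vertices are the perfect matchings, two perfect matchings
being adjacent whenever their symmetric difference is the edge set of a hexagon. -/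
def resGraph : SimpleGraph (PM cv ce B) where
  Adj M N := M ≠ N ∧ ∃ c ∈ B, (M.val ∆ N.val) = ce c
  symm := by
    constructor
    rintro M N ⟨hne, c, hc, hd⟩
    exact ⟨hne.symm, c, hc, by rwa [symmDiff_comm]⟩
  loopless := ⟨fun M h => h.1 rfl⟩

/-- The connected component (vertex set) of `v` in the spanning subgraph with edge set `E'`. -/
def compSet (E' : Set (Sym2 V)) (v : V) : Set V :=
  {w | (SimpleGraph.fromEdgeSet E').Reachable v w}

/-- The component of `v` in the spanning subgraph with edge set `E'` is a single edge `K₂`. -/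
def IsK2Comp (E' : Set (Sym2 V)) (v : V) : Prop :=
  ∃ u w : V, u ≠ w ∧ s(u, w) ∈ E' ∧ compSet E' v = {u, w}

/-- The component of `v` in the spanning subgraph with edge set `E'` is a cycle `Cₙ`. -/
def IsCycComp (n : ℕ) [NeZero n] (E' : Set (Sym2 V)) (v : V) : Prop :=
  ∃ c : ZMod n → V, Function.Injective c ∧ compSet E' v = Set.range c ∧
    (∀ i : ZMod n, s(c i, c (i + 1)) ∈ E') ∧
    (∀ e ∈ E', (∀ u, u ∈ e → u ∈ Set.range c) → ∃ i : ZMod n, e = s(c i, c (i + 1)))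

/-- The number of `Cₙ`-components of the spanning subgraph with edge set `E'`. -/
noncomputable def numCyc (n : ℕ) [NeZero n] (Vs : Set V) (E' : Set (Sym2 V)) : ℕ :=
  Set.ncard {S : Set V | ∃ v ∈ Vs, IsCycComp n E' v ∧ S = compSet E' v}

/-- A generalized Clar cover: a spanning subgraph (given by its edge set `E'`) of the
system each of whose connected components is a `C₆`, a `C₁₀` or a `K₂`. -/
def IsGenClarCover (E' : Set (Sym2 V)) : Prop :=
  E' ⊆ sysEdges ce B ∧
    ∀ v ∈ sysVerts cv B, IsK2Comp E' v ∨ IsCycComp 6 E' v ∨ IsCycComp 10 E' v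

/-- `gz B k l`: the number of generalized Clar covers with exactly `k` components `C₆`
and `l` components `C₁₀`. -/
noncomputable def gz (k l : ℕ) : ℕ :=
  Set.ncard {E' : Set (Sym2 V) | IsGenClarCover cv ce B E' ∧
    numCyc 6 (sysVerts cv B) E' = k ∧ numCyc 10 (sysVerts cv B) E' = l}

/-- The set of vertices of the resonance graph assigned by the map `f_{k,l}` to a
generalized Clar cover `E'`: all perfect matchings `M` such that `|M ∩ E(c)| = 3` for every
`C₆`-component (a hexagon) `c` of `E'`, `|M ∩ (E(h₁) ∪ E(h₂))| = 5` for every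
`C₁₀`-component of `E'` formed by two hexagons `h₁, h₂`, and every `K₂`-component edge
of `E'` belongs to `M`. -/
def fSet (E' : Set (Sym2 V)) : Set (PM cv ce B) :=
  {M | (∀ v ∈ sysVerts cv B, IsCycComp 6 E' v → ∀ h ∈ B, compSet E' v = cv h →
          Set.ncard (M.val ∩ ce h) = 3) ∧
       (∀ v ∈ sysVerts cv B, IsCycComp 10 E' v → ∀ h₁ ∈ B, ∀ h₂ ∈ B, h₁ ≠ h₂ →
          compSet E' v = cv h₁ ∪ cv h₂ →
          Set.ncard (M.val ∩ (ce h₁ ∪ ce h₂)) = 5) ∧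
       (∀ u w : V, s(u, w) ∈ E' → compSet E' u = {u, w} → s(u, w) ∈ M.val)}

end Generic

/-! ### The graphs `Q_{k,l}` and the generalized cube polynomial. -/

/-- The Cartesian (box) product of `n` copies of a graph `G`. -/
def boxPow {α : Type*} (G : SimpleGraph α) : (n : ℕ) → SimpleGraph (Fin n → α)
  | 0 => ⊥
  | n + 1 =>
    SimpleGraph.comap (fun f => (fun i => f i.castSucc, f (Fin.last n)))
      ((boxPow G n).boxProd G)

/-- The graph `Q_{k,l} = P₂^k □ P₃^l`. -/
def QGraph (k l : ℕ) : SimpleGraph ((Fin k → Fin 2) × (Fin l → Fin 3)) :=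
  (boxPow (SimpleGraph.pathGraph 2) k).boxProd (boxPow (SimpleGraph.pathGraph 3) l)

/-- A set of vertices is convex if every shortest path between two of its vertices
stays inside it. -/
def IsConvex {W : Type*} (G : SimpleGraph W) (S : Set W) : Prop :=
  ∀ u v : W, u ∈ S → v ∈ S → ∀ p : G.Walk u v, p.IsPath → p.length = G.dist u v →
    ∀ w ∈ p.support, w ∈ S

/-- `alphaQ G k l`: the number of induced convex subgraphs of `G` isomorphic to `Q_{k,l}`. -/
noncomputable def alphaQ {W : Type*} (G : SimpleGraph W) (k l : ℕ) : ℕ :=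
  Set.ncard {S : Set W | IsConvex G S ∧ Nonempty (G.induce S ≃g QGraph k l)}

end GZZ
namespace GZZ

/-- The "tuple" description of `Q_{k,l}`: vertices are tuples
`(b₁, …, b_k, b_{k+1}, …, b_{k+l})` with `bᵢ ∈ {0,1}` for `i ≤ k` and `bᵢ ∈ {0,1,2}` for
`i > k`, two tuples being adjacent iff they differ by exactly `1` in exactly one
coordinate. -/
def tupleGraph (k l : ℕ) : SimpleGraph ((Fin k → Fin 2) × (Fin l → Fin 3)) where
  Adj p q :=
    (∃ i : Fin k, ((p.1 i : ℕ) = (q.1 i : ℕ) + 1 ∨ (q.1 i : ℕ) = (p.1 i : ℕ) + 1) ∧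
      (∀ j : Fin k, j ≠ i → p.1 j = q.1 j) ∧ p.2 = q.2) ∨
    (∃ i : Fin l, ((p.2 i : ℕ) = (q.2 i : ℕ) + 1 ∨ (q.2 i : ℕ) = (p.2 i : ℕ) + 1) ∧
      (∀ j : Fin l, j ≠ i → p.2 j = q.2 j) ∧ p.1 = q.1)
  symm := by
    constructor
    rintro p q (⟨i, hd, hj, h2⟩ | ⟨i, hd, hj, h2⟩)
    · exact Or.inl ⟨i, hd.symm, fun j hji => (hj j hji).symm, h2.symm⟩
    · exact Or.inr ⟨i, hd.symm, fun j hji => (hj j hji).symm, h2.symm⟩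
  loopless := by
    constructor
    rintro p (⟨i, hd, -, -⟩ | ⟨i, hd, -, -⟩) <;> omega

end GZZ
namespace GZZ

section Aux

lemma mem_cellVerts_iff {v c : V2} :
    v ∈ cellVerts c ↔ c.1 ≤ v.1 ∧ v.1 ≤ c.1 + 2 ∧ (v.2 = c.2 ∨ v.2 = c.2 + 1) := by
  simp only [cellVerts, Set.mem_insert_iff, Set.mem_singleton_iff, Prod.ext_iff]
  constructor
  · rintro (⟨h1, h2⟩ | ⟨h1, h2⟩ | ⟨h1, h2⟩ | ⟨h1, h2⟩ | ⟨h1, h2⟩ | ⟨h1, h2⟩) <;> omega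
  · rintro ⟨h1, h2, h3 | h3⟩ <;> omega

lemma three_collapse {c d : V2} (hc : Even (c.1 + c.2)) (hd : Even (d.1 + d.2))
    (hcd : c ≠ d) {v1 v2 v3 : V2}
    (h1 : v1 ∈ cellVerts c ∩ cellVerts d) (h2 : v2 ∈ cellVerts c ∩ cellVerts d)
    (h3 : v3 ∈ cellVerts c ∩ cellVerts d) : v1 = v2 ∨ v1 = v3 ∨ v2 = v3 := by
  obtain ⟨m, hm⟩ := hc
  obtain ⟨n, hn⟩ := hd
  have hcd' : ¬(c.1 = d.1 ∧ c.2 = d.2) := by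
    intro ⟨ha, hb⟩; exact hcd (Prod.ext ha hb)
  simp only [Set.mem_inter_iff, mem_cellVerts_iff] at h1 h2 h3
  simp only [Prod.ext_iff]
  omega

lemma edge_endpoints {e : Sym2 V2} {c : V2} (he : e ∈ cellEdges c) :
    ∃ u w : V2, u ≠ w ∧ e = s(u, w) ∧ u ∈ cellVerts c ∧ w ∈ cellVerts c := by
  simp only [cellEdges, Set.mem_insert_iff, Set.mem_singleton_iff] at he
  rcases he with h | h | h | h | h | h <;>
    refine ⟨_, _, ?_, h, ?_, ?_⟩ <;>
    simp [cellVerts, Prod.ext_iff] <;> omega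

lemma exists_edge_at {v c : V2} (hv : v ∈ cellVerts c) :
    ∃ g ∈ cellEdges c, v ∈ g := by
  simp only [cellVerts, Set.mem_insert_iff, Set.mem_singleton_iff] at hv
  rcases hv with h | h | h | h | h | h <;> subst h
  · exact ⟨s((c.1, c.2), (c.1 + 1, c.2)), by simp [cellEdges], by simp⟩
  · exact ⟨s((c.1, c.2), (c.1 + 1, c.2)), by simp [cellEdges], by simp⟩
  · exact ⟨s((c.1 + 1, c.2), (c.1 + 2, c.2)), by simp [cellEdges], by simp⟩
  · exact ⟨s((c.1, c.2 + 1), (c.1 + 1, c.2 + 1)), by simp [cellEdges], by simp⟩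
  · exact ⟨s((c.1, c.2 + 1), (c.1 + 1, c.2 + 1)), by simp [cellEdges], by simp⟩
  · exact ⟨s((c.1 + 1, c.2 + 1), (c.1 + 2, c.2 + 1)), by simp [cellEdges], by simp⟩

lemma shared_edges_subsingleton {c d : V2} (hc : Even (c.1 + c.2)) (hd : Even (d.1 + d.2))
    (hcd : c ≠ d) {e f : Sym2 V2} (he : e ∈ cellEdges c ∩ cellEdges d)
    (hf : f ∈ cellEdges c ∩ cellEdges d) : e = f := by
  obtain ⟨u1, w1, hne1, rfl, hu1c, hw1c⟩ := edge_endpoints he.1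
  obtain ⟨u2, w2, hne2, rfl, hu2c, hw2c⟩ := edge_endpoints hf.1
  obtain ⟨u1', w1', hne1', heq1, hu1d, hw1d⟩ := edge_endpoints he.2
  obtain ⟨u2', w2', hne2', heq2, hu2d, hw2d⟩ := edge_endpoints hf.2
  rw [Sym2.eq_iff] at heq1 heq2
  have hu1d' : u1 ∈ cellVerts d := by rcases heq1 with ⟨g1, g2⟩ | ⟨g1, g2⟩ <;> subst g1 <;> assumption
  have hw1d' : w1 ∈ cellVerts d := by rcases heq1 with ⟨g1, g2⟩ | ⟨g1, g2⟩ <;> subst g2 <;> assumption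
  have hu2d' : u2 ∈ cellVerts d := by rcases heq2 with ⟨g1, g2⟩ | ⟨g1, g2⟩ <;> subst g1 <;> assumption
  have hw2d' : w2 ∈ cellVerts d := by rcases heq2 with ⟨g1, g2⟩ | ⟨g1, g2⟩ <;> subst g2 <;> assumption
  have c1 := three_collapse hc hd hcd ⟨hu1c, hu1d'⟩ ⟨hw1c, hw1d'⟩ ⟨hu2c, hu2d'⟩
  have c2 := three_collapse hc hd hcd ⟨hu1c, hu1d'⟩ ⟨hw1c, hw1d'⟩ ⟨hw2c, hw2d'⟩
  rw [Sym2.eq_iff]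
  rcases c1 with h1 | h1 | h1
  · exact absurd h1 hne1
  · rcases c2 with h2 | h2 | h2
    · exact absurd h2 hne1
    · exact absurd (h1.symm.trans h2) hne2
    · exact Or.inl ⟨h1, h2⟩
  · rcases c2 with h2 | h2 | h2
    · exact absurd h2 hne1
    · exact Or.inr ⟨h2, h1⟩
    · exact absurd (h1.symm.trans h2) hne2

lemma four_distinct_edges (c : V2) :
    ∃ e1 e2 e3 e4, e1 ∈ cellEdges c ∧ e2 ∈ cellEdges c ∧ e3 ∈ cellEdges c ∧ e4 ∈ cellEdges c ∧
      e1 ≠ e2 ∧ e1 ≠ e3 ∧ e1 ≠ e4 ∧ e2 ≠ e3 ∧ e2 ≠ e4 ∧ e3 ≠ e4 := by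
  refine ⟨s((c.1, c.2), (c.1 + 1, c.2)), s((c.1 + 1, c.2), (c.1 + 2, c.2)),
    s((c.1, c.2 + 1), (c.1 + 1, c.2 + 1)), s((c.1 + 1, c.2 + 1), (c.1 + 2, c.2 + 1)),
    by simp [cellEdges], by simp [cellEdges], by simp [cellEdges], by simp [cellEdges],
    ?_, ?_, ?_, ?_, ?_, ?_⟩ <;>
  · simp only [ne_eq, Sym2.eq_iff, Prod.ext_iff]
    omega

lemma pigeon4 {α : Type*} {S1 S2 S3 : Set α}
    (h1 : ∀ x ∈ S1, ∀ y ∈ S1, x = y) (h2 : ∀ x ∈ S2, ∀ y ∈ S2, x = y)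
    (h3 : ∀ x ∈ S3, ∀ y ∈ S3, x = y) {e1 e2 e3 e4 : α}
    (m1 : e1 ∈ S1 ∨ e1 ∈ S2 ∨ e1 ∈ S3) (m2 : e2 ∈ S1 ∨ e2 ∈ S2 ∨ e2 ∈ S3)
    (m3 : e3 ∈ S1 ∨ e3 ∈ S2 ∨ e3 ∈ S3) (m4 : e4 ∈ S1 ∨ e4 ∈ S2 ∨ e4 ∈ S3)
    (d12 : e1 ≠ e2) (d13 : e1 ≠ e3) (d14 : e1 ≠ e4)
    (d23 : e2 ≠ e3) (d24 : e2 ≠ e4) (d34 : e3 ≠ e4) : False := by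
  rcases m1 with m1 | m1 | m1 <;> rcases m2 with m2 | m2 | m2 <;>
    rcases m3 with m3 | m3 | m3 <;> rcases m4 with m4 | m4 | m4 <;>
    first
      | exact d12 (h1 _ m1 _ m2) | exact d12 (h2 _ m1 _ m2) | exact d12 (h3 _ m1 _ m2)
      | exact d13 (h1 _ m1 _ m3) | exact d13 (h2 _ m1 _ m3) | exact d13 (h3 _ m1 _ m3)
      | exact d14 (h1 _ m1 _ m4) | exact d14 (h2 _ m1 _ m4) | exact d14 (h3 _ m1 _ m4)
      | exact d23 (h1 _ m2 _ m3) | exact d23 (h2 _ m2 _ m3) | exact d23 (h3 _ m2 _ m3)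
      | exact d24 (h1 _ m2 _ m4) | exact d24 (h2 _ m2 _ m4) | exact d24 (h3 _ m2 _ m4)
      | exact d34 (h1 _ m3 _ m4) | exact d34 (h2 _ m3 _ m4) | exact d34 (h3 _ m3 _ m4)

/-- If `M ∆ N` is the edge set of a hexagon `hx` then every vertex of `hx` (belonging to
the system) is covered by an edge of `M` lying on `hx`. -/
lemma matching_edge_at {B : Set V2} (M N : PM cellVerts cellEdges B) {hx : V2}
    (hMN : M.val ∆ N.val = cellEdges hx) {v : V2} (hv : v ∈ cellVerts hx)
    (hvs : v ∈ sysVerts cellVerts B) :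
    ∃ g, g ∈ M.val ∧ g ∈ cellEdges hx ∧ v ∈ g := by
  obtain ⟨g, hg, hvg⟩ := exists_edge_at hv
  by_cases hgM : g ∈ M.val
  · exact ⟨g, hgM, hg, hvg⟩
  · have hgN : g ∈ N.val := by
      have hs : g ∈ M.val ∆ N.val := by rw [hMN]; exact hg
      rw [Set.mem_symmDiff] at hs; tauto
    obtain ⟨e, heM, hve⟩ := M.prop.2.2 v hvs
    refine ⟨e, heM, ?_, hve⟩
    by_contra heh
    have heN : e ∈ N.val := by
      have hs : e ∉ M.val ∆ N.val := by rw [hMN]; exact heh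
      rw [Set.mem_symmDiff] at hs; tauto
    have hegne : e ≠ g := fun hfeq => hgM (hfeq ▸ heM)
    exact N.prop.2.1 e heN g hgN hegne v hve hvg

/-- The core contradiction: two hexagons coming from distinct directions of a square
in the resonance graph cannot share a vertex. -/
lemma core_contradiction {B : Set V2} (hEv : ∀ c ∈ B, Even (c.1 + c.2))
    (M0 Mi Mj M2 : PM cellVerts cellEdges B)
    {hi hj c c' : V2} (hiB : hi ∈ B) (hjB : hj ∈ B) (hcB : c ∈ B) (hc'B : c' ∈ B)
    (hEi : M0.val ∆ Mi.val = cellEdges hi) (hEj : M0.val ∆ Mj.val = cellEdges hj)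
    (hCc : Mi.val ∆ M2.val = cellEdges c) (hCc' : Mj.val ∆ M2.val = cellEdges c')
    (hneE : cellEdges hi ≠ cellEdges hj) (hM02 : M0.val ≠ M2.val)
    {v : V2} (hvi : v ∈ cellVerts hi) (hvj : v ∈ cellVerts hj) : False := by
  have hij : hi ≠ hj := fun e => hneE (congrArg _ e)
  have hvs : v ∈ sysVerts cellVerts B := Set.mem_biUnion hiB hvi
  -- the common edge of `hi` and `hj` through `v` belonging to `M0`
  obtain ⟨a, haM, hai, hva⟩ := matching_edge_at M0 Mi hEi hvi hvs
  obtain ⟨b, hbM, hbj, hvb⟩ := matching_edge_at M0 Mj hEj hvj hvs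
  have hab : a = b := by
    by_contra ne
    exact M0.prop.2.1 a haM b hbM ne v hva hvb
  subst hab
  have haj : a ∈ cellEdges hj := hbj
  have hD : cellEdges hi ∆ cellEdges c = cellEdges hj ∆ cellEdges c' := by
    rw [← hEi, ← hCc, ← hEj, ← hCc', symmDiff_assoc, symmDiff_symmDiff_cancel_left,
      symmDiff_assoc, symmDiff_symmDiff_cancel_left]
  by_cases h1 : cellEdges c = cellEdges hi
  · apply hM02
    have heq : M0.val ∆ Mi.val = Mi.val ∆ M2.val := by rw [hEi, hCc, h1]
    calc M0.val = M0.val ∆ Mi.val ∆ Mi.val := (symmDiff_symmDiff_cancel_right _ _).symm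
      _ = Mi.val ∆ M2.val ∆ Mi.val := by rw [heq]
      _ = M2.val := by rw [symmDiff_comm (Mi.val) (M2.val), symmDiff_symmDiff_cancel_right]
  by_cases h2 : cellEdges c' = cellEdges hj
  · apply hM02
    have heq : M0.val ∆ Mj.val = Mj.val ∆ M2.val := by rw [hEj, hCc', h2]
    calc M0.val = M0.val ∆ Mj.val ∆ Mj.val := (symmDiff_symmDiff_cancel_right _ _).symm
      _ = Mj.val ∆ M2.val ∆ Mj.val := by rw [heq]
      _ = M2.val := by rw [symmDiff_comm (Mj.val) (M2.val), symmDiff_symmDiff_cancel_right]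
  by_cases h3 : cellEdges c = cellEdges hj
  · have hE2 : Mi.val ∆ M2.val = cellEdges hj := hCc.trans h3
    obtain ⟨g, hgMi, hgj, hvg⟩ := matching_edge_at Mi M2 hE2 hvj hvs
    have hEi' : Mi.val ∆ M0.val = cellEdges hi := by rw [symmDiff_comm]; exact hEi
    obtain ⟨f, hfMi, hfi, hvf⟩ := matching_edge_at Mi M0 hEi' hvi hvs
    have hfg : f = g := by
      by_contra ne
      exact Mi.prop.2.1 f hfMi g hgMi ne v hvf hvg
    have hfa : f = a := shared_edges_subsingleton (hEv _ hiB) (hEv _ hjB) hij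
      ⟨hfi, hfg ▸ hgj⟩ ⟨hai, haj⟩
    have : a ∈ M0.val ∆ Mi.val := by rw [hEi]; exact hai
    rw [Set.mem_symmDiff] at this
    rcases this with ⟨-, hn⟩ | ⟨-, hn⟩
    · exact hn (hfa ▸ hfMi)
    · exact hn haM
  by_cases h4 : cellEdges c' = cellEdges hi
  · have hE2 : Mj.val ∆ M2.val = cellEdges hi := hCc'.trans h4
    obtain ⟨g, hgMj, hgi, hvg⟩ := matching_edge_at Mj M2 hE2 hvi hvs
    have hEj' : Mj.val ∆ M0.val = cellEdges hj := by rw [symmDiff_comm]; exact hEj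
    obtain ⟨f, hfMj, hfj, hvf⟩ := matching_edge_at Mj M0 hEj' hvj hvs
    have hfg : f = g := by
      by_contra ne
      exact Mj.prop.2.1 f hfMj g hgMj ne v hvf hvg
    have hfa : f = a := shared_edges_subsingleton (hEv _ hiB) (hEv _ hjB) hij
      ⟨hfg ▸ hgi, hfj⟩ ⟨hai, haj⟩
    have : a ∈ M0.val ∆ Mj.val := by rw [hEj]; exact haj
    rw [Set.mem_symmDiff] at this
    rcases this with ⟨-, hn⟩ | ⟨-, hn⟩
    · exact hn (hfa ▸ hfMj)
    · exact hn hbM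
  -- final case: `c` and `c'` are different from `hi`, `hj` and from each other
  have hcc' : cellEdges c ≠ cellEdges c' := by
    intro e
    apply hneE
    rw [e] at hD
    exact symmDiff_left_inj.mp hD
  have hD2 : cellEdges c ∆ cellEdges c' = cellEdges hi ∆ cellEdges hj := by
    calc cellEdges c ∆ cellEdges c'
        = cellEdges hi ∆ (cellEdges hi ∆ cellEdges c) ∆ cellEdges c' := by
          rw [symmDiff_symmDiff_cancel_left]
      _ = cellEdges hi ∆ (cellEdges hj ∆ cellEdges c') ∆ cellEdges c' := by rw [hD]
      _ = cellEdges hi ∆ cellEdges hj := by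
          rw [symmDiff_assoc, symmDiff_symmDiff_cancel_right]
  obtain ⟨e1, e2, e3, e4, he1, he2, he3, he4, d12, d13, d14, d23, d24, d34⟩ :=
    four_distinct_edges c
  have classify : ∀ e ∈ cellEdges c,
      e ∈ cellEdges c ∩ cellEdges c' ∨ e ∈ cellEdges c ∩ cellEdges hi ∨
        e ∈ cellEdges c ∩ cellEdges hj := by
    intro e he
    by_cases hc' : e ∈ cellEdges c'
    · exact Or.inl ⟨he, hc'⟩
    · have hs : e ∈ cellEdges c ∆ cellEdges c' := Set.mem_symmDiff.mpr (Or.inl ⟨he, hc'⟩)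
      rw [hD2, Set.mem_symmDiff] at hs
      rcases hs with ⟨hh, -⟩ | ⟨hh, -⟩
      · exact Or.inr (Or.inl ⟨he, hh⟩)
      · exact Or.inr (Or.inr ⟨he, hh⟩)
  have hsub1 : ∀ x ∈ cellEdges c ∩ cellEdges c', ∀ y ∈ cellEdges c ∩ cellEdges c', x = y :=
    fun x hx y hy => shared_edges_subsingleton (hEv _ hcB) (hEv _ hc'B)
      (fun e => hcc' (congrArg _ e)) hx hy
  have hsub2 : ∀ x ∈ cellEdges c ∩ cellEdges hi, ∀ y ∈ cellEdges c ∩ cellEdges hi, x = y :=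
    fun x hx y hy => shared_edges_subsingleton (hEv _ hcB) (hEv _ hiB)
      (fun e => h1 (congrArg _ e)) hx hy
  have hsub3 : ∀ x ∈ cellEdges c ∩ cellEdges hj, ∀ y ∈ cellEdges c ∩ cellEdges hj, x = y :=
    fun x hx y hy => shared_edges_subsingleton (hEv _ hcB) (hEv _ hjB)
      (fun e => h3 (congrArg _ e)) hx hy
  exact pigeon4 hsub1 hsub2 hsub3 (classify e1 he1) (classify e2 he2) (classify e3 he3)
    (classify e4 he4) d12 d13 d14 d23 d24 d34

end Aux

lemma tupleGraph_adj_of {k l : ℕ} {p q : (Fin k → Fin 2) × (Fin l → Fin 3)}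
    (hOr : (∃ i : Fin k, ((p.1 i : ℕ) = (q.1 i : ℕ) + 1 ∨ (q.1 i : ℕ) = (p.1 i : ℕ) + 1) ∧
        (∀ j : Fin k, j ≠ i → p.1 j = q.1 j) ∧ p.2 = q.2) ∨
      (∃ i : Fin l, ((p.2 i : ℕ) = (q.2 i : ℕ) + 1 ∨ (q.2 i : ℕ) = (p.2 i : ℕ) + 1) ∧
        (∀ j : Fin l, j ≠ i → p.2 j = q.2 j) ∧ p.1 = q.1)) :
    (tupleGraph k l).Adj p q := hOr

/-- **Claim 1.** Let `Q` be an induced convex subgraph of the resonance graph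
of a benzenoid system `G`, isomorphic to `Q_{k,l}` with vertices identified with tuples.
Let `M` be the all-zero vertex, `Nⁱ` the vertex with `1` in position `i` and `0` elsewhere,
and `hᵢ` the hexagon of `G` with `M ⊕ Nⁱ = E(hᵢ)`. Then the hexagons `h₁, …, h_{k+l}` are
pairwise vertex-disjoint. -/
theorem hexagons_pairwise_disjoint (B : Set V2) (hB : IsBenzenoid B)
    (hex : ∃ M, IsPM cellVerts cellEdges B M) (k l : ℕ)
    (S : Set (PM cellVerts cellEdges B))
    (hconv : IsConvex (resGraph cellVerts cellEdges B) S)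
    (φ : tupleGraph k l ≃g (resGraph cellVerts cellEdges B).induce S)
    (N : Fin k ⊕ Fin l → (Fin k → Fin 2) × (Fin l → Fin 3))
    (hNk : ∀ i : Fin k, N (Sum.inl i) = (fun j => if j = i then 1 else 0, fun _ => 0))
    (hNl : ∀ i : Fin l, N (Sum.inr i) = (fun _ => 0, fun j => if j = i then 1 else 0))
    (h : Fin k ⊕ Fin l → V2) (hhB : ∀ i, h i ∈ B)
    (hhex : ∀ i, (φ (fun _ => 0, fun _ => 0)).val.val ∆ (φ (N i)).val.val = cellEdges (h i)) :
    ∀ i j, i ≠ j → cellVerts (h i) ∩ cellVerts (h j) = ∅ := by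
  intro i j hij
  rw [Set.eq_empty_iff_forall_notMem]
  intro v hv
  have hEv : ∀ c ∈ B, Even (c.1 + c.2) := hB.2.2.1
  have getc : ∀ p q : (Fin k → Fin 2) × (Fin l → Fin 3), (tupleGraph k l).Adj p q →
      ∃ c ∈ B, (φ p).val.val ∆ (φ q).val.val = cellEdges c := by
    intro p q hadj
    have h2 := φ.map_rel_iff.mpr hadj
    have h3 : (φ p).val ≠ (φ q).val ∧ ∃ c ∈ B,
        (φ p).val.val ∆ (φ q).val.val = cellEdges c := h2
    exact h3.2
  obtain ⟨P, hP0, hNne, hadjI, hadjJ⟩ :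
      ∃ P : (Fin k → Fin 2) × (Fin l → Fin 3),
        P ≠ ((fun _ => 0, fun _ => 0) : (Fin k → Fin 2) × (Fin l → Fin 3)) ∧ N i ≠ N j ∧
        (tupleGraph k l).Adj (N i) P ∧ (tupleGraph k l).Adj (N j) P := by
    cases i with
    | inl a =>
      cases j with
      | inl b =>
        have hab : a ≠ b := fun e => hij (by rw [e])
        refine ⟨(fun t => if t = a ∨ t = b then 1 else 0, fun _ => 0), ?_, ?_, ?_, ?_⟩
        · intro e
          have h' := congrFun (congrArg Prod.fst e) a
          simp at h'
        · rw [hNk, hNk]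
          intro e
          have h' := congrFun (congrArg Prod.fst e) a
          simp [hab] at h'
        · rw [hNk]
          apply tupleGraph_adj_of
          refine Or.inl ⟨b, Or.inr ?_, ?_, rfl⟩
          · simp [hab, Ne.symm hab]
          · intro t ht; simp [ht]
        · rw [hNk]
          apply tupleGraph_adj_of
          refine Or.inl ⟨a, Or.inr ?_, ?_, rfl⟩
          · simp [hab, Ne.symm hab]
          · intro t ht; simp [ht]
      | inr b =>
        refine ⟨(fun t => if t = a then 1 else 0, fun t => if t = b then 1 else 0),
          ?_, ?_, ?_, ?_⟩
        · intro e
          have h' := congrFun (congrArg Prod.fst e) a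
          simp at h'
        · rw [hNk, hNl]
          intro e
          have h' := congrFun (congrArg Prod.fst e) a
          simp at h'
        · rw [hNk]
          apply tupleGraph_adj_of
          refine Or.inr ⟨b, Or.inr ?_, ?_, rfl⟩
          · simp
          · intro t ht; simp [ht]
        · rw [hNl]
          apply tupleGraph_adj_of
          refine Or.inl ⟨a, Or.inr ?_, ?_, rfl⟩
          · simp
          · intro t ht; simp [ht]
    | inr a =>
      cases j with
      | inl b =>
        refine ⟨(fun t => if t = b then 1 else 0, fun t => if t = a then 1 else 0),
          ?_, ?_, ?_, ?_⟩
        · intro e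
          have h' := congrFun (congrArg Prod.snd e) a
          simp at h'
        · rw [hNl, hNk]
          intro e
          have h' := congrFun (congrArg Prod.snd e) a
          simp at h'
        · rw [hNl]
          apply tupleGraph_adj_of
          refine Or.inl ⟨b, Or.inr ?_, ?_, rfl⟩
          · simp
          · intro t ht; simp [ht]
        · rw [hNk]
          apply tupleGraph_adj_of
          refine Or.inr ⟨a, Or.inr ?_, ?_, rfl⟩
          · simp
          · intro t ht; simp [ht]
      | inr b =>
        have hab : a ≠ b := fun e => hij (by rw [e])
        refine ⟨(fun _ => 0, fun t => if t = a ∨ t = b then 1 else 0), ?_, ?_, ?_, ?_⟩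
        · intro e
          have h' := congrFun (congrArg Prod.snd e) a
          simp at h'
        · rw [hNl, hNl]
          intro e
          have h' := congrFun (congrArg Prod.snd e) a
          simp [hab] at h'
        · rw [hNl]
          apply tupleGraph_adj_of
          refine Or.inr ⟨b, Or.inr ?_, ?_, rfl⟩
          · simp [hab, Ne.symm hab]
          · intro t ht; simp [ht]
        · rw [hNl]
          apply tupleGraph_adj_of
          refine Or.inr ⟨a, Or.inr ?_, ?_, rfl⟩
          · simp [hab, Ne.symm hab]
          · intro t ht; simp [ht]
  have hneE : cellEdges (h i) ≠ cellEdges (h j) := by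
    intro e
    have h1 := hhex i
    rw [e, ← hhex j] at h1
    have h2 := symmDiff_right_inj.mp h1
    exact hNne (φ.toEquiv.injective (Subtype.ext (Subtype.ext h2)))
  obtain ⟨c, hcB, hCc⟩ := getc _ _ hadjI
  obtain ⟨c', hc'B, hCc'⟩ := getc _ _ hadjJ
  have hM02 : (φ ((fun _ => 0, fun _ => 0) :
      (Fin k → Fin 2) × (Fin l → Fin 3))).val.val ≠ (φ P).val.val := by
    intro e
    exact hP0 (φ.toEquiv.injective (Subtype.ext (Subtype.ext e))).symm
  exact core_contradiction hEv (φ (fun _ => 0, fun _ => 0)).val (φ (N i)).val (φ (N j)).val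
    (φ P).val (hhB i) (hhB j) hcB hc'B (hhex i) (hhex j) hCc hCc' hneE hM02 hv.1 hv.2

end GZZ
end

section
/- Let G be a benzenoid system with a perfect matching, let Q be an induced convex subgraph of R(G) isomorphic to Q_{k,l} with vertices identified with tuples as in the standard representation. For i ∈ {k+1,…,k+l} let N^i be the vertex with 1 in position i and 0 elsewhere, O^i the vertex with 2 in position i and 0 elsewhere, and h_i' the hexagon of G with N^i ⊕ O^i = E(h_i'). Then for all distinct i, j ∈ {k+1,…,k+l}, the hexagons h_i' and h_j' are vertex-disjoint. -/
open scoped symmDiff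

namespace GZZ


/-! ### Auxiliary lemmas -/

lemma hmem_b1 {c d : V2} (hc : Even (c.1 + c.2)) (hd : Even (d.1 + d.2))
    (h : s(((c.1 : ℤ), (c.2 : ℤ)), ((c.1 + 1 : ℤ), (c.2 : ℤ))) ∈ cellEdges d) :
    (d.1 = c.1 ∧ d.2 = c.2) ∨ (d.1 = c.1 - 1 ∧ d.2 = c.2 - 1) := by
  obtain ⟨m, hm⟩ := hc
  obtain ⟨n, hn⟩ := hd
  simp only [cellEdges, Set.mem_insert_iff, Set.mem_singleton_iff, Sym2.eq_iff, Prod.ext_iff, Prod.mk.injEq] at h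
  omega

lemma hmem_b2 {c d : V2} (hc : Even (c.1 + c.2)) (hd : Even (d.1 + d.2))
    (h : s(((c.1 + 1 : ℤ), (c.2 : ℤ)), ((c.1 + 2 : ℤ), (c.2 : ℤ))) ∈ cellEdges d) :
    (d.1 = c.1 ∧ d.2 = c.2) ∨ (d.1 = c.1 + 1 ∧ d.2 = c.2 - 1) := by
  obtain ⟨m, hm⟩ := hc
  obtain ⟨n, hn⟩ := hd
  simp only [cellEdges, Set.mem_insert_iff, Set.mem_singleton_iff, Sym2.eq_iff, Prod.ext_iff, Prod.mk.injEq] at h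
  omega

lemma hmem_t1 {c d : V2} (hc : Even (c.1 + c.2)) (hd : Even (d.1 + d.2))
    (h : s(((c.1 : ℤ), (c.2 + 1 : ℤ)), ((c.1 + 1 : ℤ), (c.2 + 1 : ℤ))) ∈ cellEdges d) :
    (d.1 = c.1 ∧ d.2 = c.2) ∨ (d.1 = c.1 - 1 ∧ d.2 = c.2 + 1) := by
  obtain ⟨m, hm⟩ := hc
  obtain ⟨n, hn⟩ := hd
  simp only [cellEdges, Set.mem_insert_iff, Set.mem_singleton_iff, Sym2.eq_iff, Prod.ext_iff, Prod.mk.injEq] at h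
  omega

lemma hmem_t2 {c d : V2} (hc : Even (c.1 + c.2)) (hd : Even (d.1 + d.2))
    (h : s(((c.1 + 1 : ℤ), (c.2 + 1 : ℤ)), ((c.1 + 2 : ℤ), (c.2 + 1 : ℤ))) ∈ cellEdges d) :
    (d.1 = c.1 ∧ d.2 = c.2) ∨ (d.1 = c.1 + 1 ∧ d.2 = c.2 + 1) := by
  obtain ⟨m, hm⟩ := hc
  obtain ⟨n, hn⟩ := hd
  simp only [cellEdges, Set.mem_insert_iff, Set.mem_singleton_iff, Sym2.eq_iff, Prod.ext_iff, Prod.mk.injEq] at h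
  omega

lemma hmem_l {c d : V2} (hc : Even (c.1 + c.2)) (hd : Even (d.1 + d.2))
    (h : s(((c.1 : ℤ), (c.2 : ℤ)), ((c.1 : ℤ), (c.2 + 1 : ℤ))) ∈ cellEdges d) :
    (d.1 = c.1 ∧ d.2 = c.2) ∨ (d.1 = c.1 - 2 ∧ d.2 = c.2) := by
  obtain ⟨m, hm⟩ := hc
  obtain ⟨n, hn⟩ := hd
  simp only [cellEdges, Set.mem_insert_iff, Set.mem_singleton_iff, Sym2.eq_iff, Prod.ext_iff, Prod.mk.injEq] at h
  omega

lemma hmem_r {c d : V2} (hc : Even (c.1 + c.2)) (hd : Even (d.1 + d.2))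
    (h : s(((c.1 + 2 : ℤ), (c.2 : ℤ)), ((c.1 + 2 : ℤ), (c.2 + 1 : ℤ))) ∈ cellEdges d) :
    (d.1 = c.1 ∧ d.2 = c.2) ∨ (d.1 = c.1 + 2 ∧ d.2 = c.2) := by
  obtain ⟨m, hm⟩ := hc
  obtain ⟨n, hn⟩ := hd
  simp only [cellEdges, Set.mem_insert_iff, Set.mem_singleton_iff, Sym2.eq_iff, Prod.ext_iff, Prod.mk.injEq] at h
  omega

set_option maxHeartbeats 2000000 in
lemma vert_offset {c d v : V2} (hc : Even (c.1 + c.2)) (hd : Even (d.1 + d.2))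
    (h1 : v ∈ cellVerts c) (h2 : v ∈ cellVerts d) :
    (d.1 = c.1 ∧ d.2 = c.2) ∨ (d.1 = c.1 + 2 ∧ d.2 = c.2) ∨ (d.1 = c.1 - 2 ∧ d.2 = c.2) ∨
    (d.1 = c.1 + 1 ∧ d.2 = c.2 + 1) ∨ (d.1 = c.1 + 1 ∧ d.2 = c.2 - 1) ∨
    (d.1 = c.1 - 1 ∧ d.2 = c.2 + 1) ∨ (d.1 = c.1 - 1 ∧ d.2 = c.2 - 1) := by
  obtain ⟨m, hm⟩ := hc
  obtain ⟨n, hn⟩ := hd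
  simp only [cellVerts, Set.mem_insert_iff, Set.mem_singleton_iff, Prod.ext_iff] at h1 h2
  rcases h1 with h1|h1|h1|h1|h1|h1 <;> rcases h2 with h2|h2|h2|h2|h2|h2 <;> omega

set_option maxHeartbeats 2000000 in
lemma inter_r (c : V2) :
    cellEdges ((c.1 + 2 : ℤ), (c.2 : ℤ)) ∩ cellEdges c =
      {s(((c.1 + 2 : ℤ), (c.2 : ℤ)), ((c.1 + 2 : ℤ), (c.2 + 1 : ℤ)))} := by
  refine Set.Subset.antisymm ?_ ?_
  · intro e he
    obtain ⟨h1, h2⟩ := he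
    induction e using Sym2.ind with
    | _ p q =>
      simp only [cellEdges, Set.mem_insert_iff, Set.mem_singleton_iff, Sym2.eq_iff,
        Prod.ext_iff] at h1 h2 ⊢
      rcases h1 with h1|h1|h1|h1|h1|h1 <;> omega
  · intro e he
    rw [Set.mem_singleton_iff] at he
    subst he
    exact ⟨by simp only [cellEdges, Set.mem_insert_iff, Set.mem_singleton_iff]; tauto, by simp only [cellEdges, Set.mem_insert_iff, Set.mem_singleton_iff]; tauto⟩

set_option maxHeartbeats 2000000 in
lemma inter_l (c : V2) :
    cellEdges ((c.1 - 2 : ℤ), (c.2 : ℤ)) ∩ cellEdges c =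
      {s(((c.1 : ℤ), (c.2 : ℤ)), ((c.1 : ℤ), (c.2 + 1 : ℤ)))} := by
  refine Set.Subset.antisymm ?_ ?_
  · intro e he
    obtain ⟨h1, h2⟩ := he
    induction e using Sym2.ind with
    | _ p q =>
      simp only [cellEdges, Set.mem_insert_iff, Set.mem_singleton_iff, Sym2.eq_iff,
        Prod.ext_iff] at h1 h2 ⊢
      rcases h1 with h1|h1|h1|h1|h1|h1 <;> omega
  · intro e he
    rw [Set.mem_singleton_iff] at he
    subst he
    refine ⟨?_, by simp only [cellEdges, Set.mem_insert_iff, Set.mem_singleton_iff]; tauto⟩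
    simp only [cellEdges, Set.mem_insert_iff, Set.mem_singleton_iff, Sym2.eq_iff, Prod.ext_iff]
    norm_num
    try omega

set_option maxHeartbeats 2000000 in
lemma inter_ur (c : V2) :
    cellEdges ((c.1 + 1 : ℤ), (c.2 + 1 : ℤ)) ∩ cellEdges c =
      {s(((c.1 + 1 : ℤ), (c.2 + 1 : ℤ)), ((c.1 + 2 : ℤ), (c.2 + 1 : ℤ)))} := by
  refine Set.Subset.antisymm ?_ ?_
  · intro e he
    obtain ⟨h1, h2⟩ := he
    induction e using Sym2.ind with
    | _ p q =>
      simp only [cellEdges, Set.mem_insert_iff, Set.mem_singleton_iff, Sym2.eq_iff,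
        Prod.ext_iff] at h1 h2 ⊢
      rcases h1 with h1|h1|h1|h1|h1|h1 <;> omega
  · intro e he
    rw [Set.mem_singleton_iff] at he
    subst he
    refine ⟨?_, by simp only [cellEdges, Set.mem_insert_iff, Set.mem_singleton_iff]; tauto⟩
    simp only [cellEdges, Set.mem_insert_iff, Set.mem_singleton_iff, Sym2.eq_iff, Prod.ext_iff]
    norm_num
    try omega

set_option maxHeartbeats 2000000 in
lemma inter_dr (c : V2) :
    cellEdges ((c.1 + 1 : ℤ), (c.2 - 1 : ℤ)) ∩ cellEdges c =
      {s(((c.1 + 1 : ℤ), (c.2 : ℤ)), ((c.1 + 2 : ℤ), (c.2 : ℤ)))} := by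
  refine Set.Subset.antisymm ?_ ?_
  · intro e he
    obtain ⟨h1, h2⟩ := he
    induction e using Sym2.ind with
    | _ p q =>
      simp only [cellEdges, Set.mem_insert_iff, Set.mem_singleton_iff, Sym2.eq_iff,
        Prod.ext_iff] at h1 h2 ⊢
      rcases h1 with h1|h1|h1|h1|h1|h1 <;> omega
  · intro e he
    rw [Set.mem_singleton_iff] at he
    subst he
    refine ⟨?_, by simp only [cellEdges, Set.mem_insert_iff, Set.mem_singleton_iff]; tauto⟩
    simp only [cellEdges, Set.mem_insert_iff, Set.mem_singleton_iff, Sym2.eq_iff, Prod.ext_iff]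
    norm_num
    try omega

set_option maxHeartbeats 2000000 in
lemma inter_ul (c : V2) :
    cellEdges ((c.1 - 1 : ℤ), (c.2 + 1 : ℤ)) ∩ cellEdges c =
      {s(((c.1 : ℤ), (c.2 + 1 : ℤ)), ((c.1 + 1 : ℤ), (c.2 + 1 : ℤ)))} := by
  refine Set.Subset.antisymm ?_ ?_
  · intro e he
    obtain ⟨h1, h2⟩ := he
    induction e using Sym2.ind with
    | _ p q =>
      simp only [cellEdges, Set.mem_insert_iff, Set.mem_singleton_iff, Sym2.eq_iff,
        Prod.ext_iff] at h1 h2 ⊢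
      rcases h1 with h1|h1|h1|h1|h1|h1 <;> omega
  · intro e he
    rw [Set.mem_singleton_iff] at he
    subst he
    refine ⟨?_, by simp only [cellEdges, Set.mem_insert_iff, Set.mem_singleton_iff]; tauto⟩
    simp only [cellEdges, Set.mem_insert_iff, Set.mem_singleton_iff, Sym2.eq_iff, Prod.ext_iff]
    norm_num
    try omega

set_option maxHeartbeats 2000000 in
lemma inter_dl (c : V2) :
    cellEdges ((c.1 - 1 : ℤ), (c.2 - 1 : ℤ)) ∩ cellEdges c =
      {s(((c.1 : ℤ), (c.2 : ℤ)), ((c.1 + 1 : ℤ), (c.2 : ℤ)))} := by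
  refine Set.Subset.antisymm ?_ ?_
  · intro e he
    obtain ⟨h1, h2⟩ := he
    induction e using Sym2.ind with
    | _ p q =>
      simp only [cellEdges, Set.mem_insert_iff, Set.mem_singleton_iff, Sym2.eq_iff,
        Prod.ext_iff] at h1 h2 ⊢
      rcases h1 with h1|h1|h1|h1|h1|h1 <;> omega
  · intro e he
    rw [Set.mem_singleton_iff] at he
    subst he
    refine ⟨?_, by simp only [cellEdges, Set.mem_insert_iff, Set.mem_singleton_iff]; tauto⟩
    simp only [cellEdges, Set.mem_insert_iff, Set.mem_singleton_iff, Sym2.eq_iff, Prod.ext_iff]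
    norm_num
    try omega

/-- One of the two perfect matchings of the hexagon `c`. -/
def MA (c : V2) : Set (Sym2 V2) :=
  {s(((c.1 : ℤ), (c.2 : ℤ)), ((c.1 + 1 : ℤ), (c.2 : ℤ))),
   s(((c.1 + 2 : ℤ), (c.2 : ℤ)), ((c.1 + 2 : ℤ), (c.2 + 1 : ℤ))),
   s(((c.1 : ℤ), (c.2 + 1 : ℤ)), ((c.1 + 1 : ℤ), (c.2 + 1 : ℤ)))}

/-- The other perfect matching of the hexagon `c`. -/
def MB (c : V2) : Set (Sym2 V2) :=
  {s(((c.1 + 1 : ℤ), (c.2 : ℤ)), ((c.1 + 2 : ℤ), (c.2 : ℤ))),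
   s(((c.1 + 1 : ℤ), (c.2 + 1 : ℤ)), ((c.1 + 2 : ℤ), (c.2 + 1 : ℤ))),
   s(((c.1 : ℤ), (c.2 : ℤ)), ((c.1 : ℤ), (c.2 + 1 : ℤ)))}

lemma MA_symmDiff_MB_ne (c : V2) (e : Sym2 V2) : MA c ∆ MB c ≠ {e} := by
  intro h
  have h1 : s(((c.1 : ℤ), (c.2 : ℤ)), ((c.1 + 1 : ℤ), (c.2 : ℤ))) ∈ MA c ∆ MB c := by
    rw [Set.mem_symmDiff]
    refine Or.inl ⟨by simp only [MA, Set.mem_insert_iff, Set.mem_singleton_iff]; tauto, ?_⟩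
    simp only [MB, Set.mem_insert_iff, Set.mem_singleton_iff, Sym2.eq_iff, Prod.ext_iff, Prod.mk.injEq]
    omega
  have h2 : s(((c.1 + 2 : ℤ), (c.2 : ℤ)), ((c.1 + 2 : ℤ), (c.2 + 1 : ℤ))) ∈ MA c ∆ MB c := by
    rw [Set.mem_symmDiff]
    refine Or.inl ⟨by simp only [MA, Set.mem_insert_iff, Set.mem_singleton_iff]; tauto, ?_⟩
    simp only [MB, Set.mem_insert_iff, Set.mem_singleton_iff, Sym2.eq_iff, Prod.ext_iff, Prod.mk.injEq]
    omega
  rw [h, Set.mem_singleton_iff] at h1 h2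
  have h3 := h1.trans h2.symm
  simp only [Sym2.eq_iff, Prod.ext_iff, Prod.mk.injEq] at h3
  omega

lemma symmDiff_inter {α : Type*} (X Y Z : Set α) : (X ∆ Y) ∩ Z = (X ∩ Z) ∆ (Y ∩ Z) := by
  ext x
  simp only [Set.mem_inter_iff, Set.mem_symmDiff]
  tauto

lemma step {X Y : Set (Sym2 V2)}
    (hX : ∀ e ∈ X, ∀ f ∈ X, e ≠ f → ∀ v : V2, v ∈ e → v ∉ f)
    {e f : Sym2 V2} (he : e ∈ X) (hf : f ∈ X ∆ Y) (hne : e ≠ f)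
    {v : V2} (hv1 : v ∈ e) (hv2 : v ∈ f) : f ∈ Y ∧ f ∉ X := by
  rcases Set.mem_symmDiff.mp hf with ⟨hm, _⟩ | ⟨hn, hm⟩
  · exact absurd hv2 (hX _ he _ hm hne _ hv1)
  · exact ⟨hn, hm⟩

set_option maxHeartbeats 2000000 in
lemma pm_alt {M N : Set (Sym2 V2)}
    (hM : ∀ e ∈ M, ∀ f ∈ M, e ≠ f → ∀ v : V2, v ∈ e → v ∉ f)
    (hN : ∀ e ∈ N, ∀ f ∈ N, e ≠ f → ∀ v : V2, v ∈ e → v ∉ f)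
    {c : V2} (hd : M ∆ N = cellEdges c)
    (h1 : s(((c.1 : ℤ), (c.2 : ℤ)), ((c.1 + 1 : ℤ), (c.2 : ℤ))) ∈ M) :
    M ∩ cellEdges c = MA c ∧ N ∩ cellEdges c = MB c := by
  have memE : ∀ e ∈ cellEdges c, e ∈ M ∆ N := fun e he => by rw [hd]; exact he
  have memE' : ∀ e ∈ cellEdges c, e ∈ N ∆ M := fun e he => by
    rw [symmDiff_comm, hd]; exact he
  have h1n : s(((c.1 : ℤ), (c.2 : ℤ)), ((c.1 + 1 : ℤ), (c.2 : ℤ))) ∉ N := by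
    rcases Set.mem_symmDiff.mp (memE _ (by simp only [cellEdges, Set.mem_insert_iff, Set.mem_singleton_iff]; tauto)) with ⟨_, hn⟩ | ⟨_, hm⟩
    · exact hn
    · exact absurd h1 hm
  have h2 : s(((c.1 + 1 : ℤ), (c.2 : ℤ)), ((c.1 + 2 : ℤ), (c.2 : ℤ))) ∈ N ∧
      s(((c.1 + 1 : ℤ), (c.2 : ℤ)), ((c.1 + 2 : ℤ), (c.2 : ℤ))) ∉ M :=
    step hM h1 (memE _ (by simp only [cellEdges, Set.mem_insert_iff, Set.mem_singleton_iff]; tauto))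
      (by simp only [Ne, Sym2.eq_iff, Prod.ext_iff, Prod.mk.injEq]; omega)
      (Sym2.mem_iff.mpr (Or.inr rfl)) (Sym2.mem_iff.mpr (Or.inl rfl))
  have h3 : s(((c.1 + 2 : ℤ), (c.2 : ℤ)), ((c.1 + 2 : ℤ), (c.2 + 1 : ℤ))) ∈ M ∧
      s(((c.1 + 2 : ℤ), (c.2 : ℤ)), ((c.1 + 2 : ℤ), (c.2 + 1 : ℤ))) ∉ N :=
    step hN h2.1 (memE' _ (by simp only [cellEdges, Set.mem_insert_iff, Set.mem_singleton_iff]; tauto))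
      (by simp only [Ne, Sym2.eq_iff, Prod.ext_iff, Prod.mk.injEq]; omega)
      (Sym2.mem_iff.mpr (Or.inr rfl)) (Sym2.mem_iff.mpr (Or.inl rfl))
  have h4 : s(((c.1 + 1 : ℤ), (c.2 + 1 : ℤ)), ((c.1 + 2 : ℤ), (c.2 + 1 : ℤ))) ∈ N ∧
      s(((c.1 + 1 : ℤ), (c.2 + 1 : ℤ)), ((c.1 + 2 : ℤ), (c.2 + 1 : ℤ))) ∉ M :=
    step hM h3.1 (memE _ (by simp only [cellEdges, Set.mem_insert_iff, Set.mem_singleton_iff]; tauto))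
      (by simp only [Ne, Sym2.eq_iff, Prod.ext_iff, Prod.mk.injEq]; omega)
      (Sym2.mem_iff.mpr (Or.inr rfl)) (Sym2.mem_iff.mpr (Or.inr rfl))
  have h5 : s(((c.1 : ℤ), (c.2 + 1 : ℤ)), ((c.1 + 1 : ℤ), (c.2 + 1 : ℤ))) ∈ M ∧
      s(((c.1 : ℤ), (c.2 + 1 : ℤ)), ((c.1 + 1 : ℤ), (c.2 + 1 : ℤ))) ∉ N :=
    step hN h4.1 (memE' _ (by simp only [cellEdges, Set.mem_insert_iff, Set.mem_singleton_iff]; tauto))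
      (by simp only [Ne, Sym2.eq_iff, Prod.ext_iff, Prod.mk.injEq]; omega)
      (Sym2.mem_iff.mpr (Or.inl rfl)) (Sym2.mem_iff.mpr (Or.inr rfl))
  have h6 : s(((c.1 : ℤ), (c.2 : ℤ)), ((c.1 : ℤ), (c.2 + 1 : ℤ))) ∈ N ∧
      s(((c.1 : ℤ), (c.2 : ℤ)), ((c.1 : ℤ), (c.2 + 1 : ℤ))) ∉ M :=
    step hM h5.1 (memE _ (by simp only [cellEdges, Set.mem_insert_iff, Set.mem_singleton_iff]; tauto))
      (by simp only [Ne, Sym2.eq_iff, Prod.ext_iff, Prod.mk.injEq]; omega)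
      (Sym2.mem_iff.mpr (Or.inl rfl)) (Sym2.mem_iff.mpr (Or.inr rfl))
  constructor
  · ext x
    simp only [Set.mem_inter_iff]
    constructor
    · rintro ⟨hxM, hxE⟩
      simp only [cellEdges, Set.mem_insert_iff, Set.mem_singleton_iff] at hxE
      rcases hxE with rfl|rfl|rfl|rfl|rfl|rfl
      · exact by simp only [MA, Set.mem_insert_iff, Set.mem_singleton_iff]; tauto
      · exact absurd hxM h2.2
      · exact by simp only [MA, Set.mem_insert_iff, Set.mem_singleton_iff]; tauto
      · exact absurd hxM h4.2
      · exact absurd hxM h6.2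
      · exact by simp only [MA, Set.mem_insert_iff, Set.mem_singleton_iff]; tauto
    · intro hx
      simp only [MA, Set.mem_insert_iff, Set.mem_singleton_iff] at hx
      rcases hx with rfl|rfl|rfl
      · exact ⟨h1, by simp only [cellEdges, Set.mem_insert_iff, Set.mem_singleton_iff]; tauto⟩
      · exact ⟨h3.1, by simp only [cellEdges, Set.mem_insert_iff, Set.mem_singleton_iff]; tauto⟩
      · exact ⟨h5.1, by simp only [cellEdges, Set.mem_insert_iff, Set.mem_singleton_iff]; tauto⟩
  · ext x
    simp only [Set.mem_inter_iff]
    constructor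
    · rintro ⟨hxN, hxE⟩
      simp only [cellEdges, Set.mem_insert_iff, Set.mem_singleton_iff] at hxE
      rcases hxE with rfl|rfl|rfl|rfl|rfl|rfl
      · exact absurd hxN h1n
      · exact by simp only [MB, Set.mem_insert_iff, Set.mem_singleton_iff]; tauto
      · exact absurd hxN h5.2
      · exact by simp only [MB, Set.mem_insert_iff, Set.mem_singleton_iff]; tauto
      · exact by simp only [MB, Set.mem_insert_iff, Set.mem_singleton_iff]; tauto
      · exact absurd hxN h3.2
    · intro hx
      simp only [MB, Set.mem_insert_iff, Set.mem_singleton_iff] at hx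
      rcases hx with rfl|rfl|rfl
      · exact ⟨h2.1, by simp only [cellEdges, Set.mem_insert_iff, Set.mem_singleton_iff]; tauto⟩
      · exact ⟨h4.1, by simp only [cellEdges, Set.mem_insert_iff, Set.mem_singleton_iff]; tauto⟩
      · exact ⟨h6.1, by simp only [cellEdges, Set.mem_insert_iff, Set.mem_singleton_iff]; tauto⟩

lemma pmhex {B : Set V2} (M N : PM cellVerts cellEdges B) {c : V2}
    (hd : M.val ∆ N.val = cellEdges c) :
    (M.val ∩ cellEdges c = MA c ∧ N.val ∩ cellEdges c = MB c) ∨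
    (M.val ∩ cellEdges c = MB c ∧ N.val ∩ cellEdges c = MA c) := by
  have hM := M.prop.2.1
  have hN := N.prop.2.1
  have h1 : s(((c.1 : ℤ), (c.2 : ℤ)), ((c.1 + 1 : ℤ), (c.2 : ℤ))) ∈ M.val ∆ N.val := by
    rw [hd]; simp only [cellEdges, Set.mem_insert_iff, Set.mem_singleton_iff]; tauto
  rcases Set.mem_symmDiff.mp h1 with ⟨hm, _⟩ | ⟨hn, _⟩
  · exact Or.inl (pm_alt hM hN hd hm)
  · obtain ⟨a, b⟩ := pm_alt hN hM (by rw [symmDiff_comm]; exact hd) hn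
    exact Or.inr ⟨b, a⟩

set_option maxHeartbeats 4000000 in
lemma square {B : Set V2} {M1 M2 M3 M4 : PM cellVerts cellEdges B} {c1 c2 c3 c4 : V2}
    (he1 : Even (c1.1 + c1.2)) (he2 : Even (c2.1 + c2.2)) (he3 : Even (c3.1 + c3.2))
    (he4 : Even (c4.1 + c4.2))
    (h12 : M1.val ∆ M2.val = cellEdges c1)
    (h23 : M2.val ∆ M3.val = cellEdges c2)
    (h34 : M3.val ∆ M4.val = cellEdges c3)
    (h41 : M4.val ∆ M1.val = cellEdges c4)
    (h13 : M1 ≠ M3) (h24 : M2 ≠ M4) :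
    c1 = c3 ∧ c2 = c4 ∧ cellVerts c1 ∩ cellVerts c2 = ∅ := by
  have hv13 : M1.val ≠ M3.val := fun h => h13 (Subtype.ext h)
  have hv24 : M2.val ≠ M4.val := fun h => h24 (Subtype.ext h)
  have hd13 : M1.val ∆ M3.val = cellEdges c1 ∆ cellEdges c2 := by
    rw [← h12, ← h23, symmDiff_assoc, symmDiff_symmDiff_cancel_left]
  have hd24 : M2.val ∆ M4.val = cellEdges c2 ∆ cellEdges c3 := by
    rw [← h23, ← h34, symmDiff_assoc, symmDiff_symmDiff_cancel_left]
  have hd31 : M3.val ∆ M1.val = cellEdges c3 ∆ cellEdges c4 := by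
    rw [← h34, ← h41, symmDiff_assoc, symmDiff_symmDiff_cancel_left]
  have hd42 : M4.val ∆ M2.val = cellEdges c4 ∆ cellEdges c1 := by
    rw [← h41, ← h12, symmDiff_assoc, symmDiff_symmDiff_cancel_left]
  have key : cellEdges c1 ∆ cellEdges c2 = cellEdges c3 ∆ cellEdges c4 := by
    rw [← hd13, ← hd31, symmDiff_comm]
  have hne12 : c1 ≠ c2 := by
    rintro rfl
    exact hv13 (symmDiff_eq_bot.mp (by rw [hd13, symmDiff_self]))
  have hne23 : c2 ≠ c3 := by
    rintro rfl
    exact hv24 (symmDiff_eq_bot.mp (by rw [hd24, symmDiff_self]))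
  have hne41 : c4 ≠ c1 := by
    rintro rfl
    exact hv24.symm (symmDiff_eq_bot.mp (by rw [hd42, symmDiff_self]))
  have hc13 : c1 = c3 := by
    by_contra hne13
    have hP : ∀ p q : V2, s(p, q) ∈ cellEdges c1 →
        (s(p, q) ∈ cellEdges c2 ∨ s(p, q) ∈ cellEdges c3 ∨ s(p, q) ∈ cellEdges c4) := by
      intro p q hp
      by_cases h : s(p, q) ∈ cellEdges c2
      · exact Or.inl h
      · have hx : s(p, q) ∈ cellEdges c1 ∆ cellEdges c2 :=
          Set.mem_symmDiff.mpr (Or.inl ⟨hp, h⟩)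
        rw [key] at hx
        rcases Set.mem_symmDiff.mp hx with ⟨h3, _⟩ | ⟨h4, _⟩
        · exact Or.inr (Or.inl h3)
        · exact Or.inr (Or.inr h4)
    have q1 := hP _ _ (show s(((c1.1 : ℤ), (c1.2 : ℤ)), ((c1.1 + 1 : ℤ), (c1.2 : ℤ))) ∈
      cellEdges c1 by simp only [cellEdges, Set.mem_insert_iff, Set.mem_singleton_iff]; tauto)
    have q2 := hP _ _ (show s(((c1.1 + 1 : ℤ), (c1.2 : ℤ)), ((c1.1 + 2 : ℤ), (c1.2 : ℤ))) ∈
      cellEdges c1 by simp only [cellEdges, Set.mem_insert_iff, Set.mem_singleton_iff]; tauto)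
    have q3 := hP _ _ (show s(((c1.1 : ℤ), (c1.2 + 1 : ℤ)), ((c1.1 + 1 : ℤ), (c1.2 + 1 : ℤ))) ∈
      cellEdges c1 by simp only [cellEdges, Set.mem_insert_iff, Set.mem_singleton_iff]; tauto)
    have q4 := hP _ _ (show s(((c1.1 + 1 : ℤ), (c1.2 + 1 : ℤ)), ((c1.1 + 2 : ℤ), (c1.2 + 1 : ℤ))) ∈
      cellEdges c1 by simp only [cellEdges, Set.mem_insert_iff, Set.mem_singleton_iff]; tauto)
    have r1 : ((c2.1 = c1.1 ∧ c2.2 = c1.2) ∨ (c2.1 = c1.1 - 1 ∧ c2.2 = c1.2 - 1)) ∨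
        ((c3.1 = c1.1 ∧ c3.2 = c1.2) ∨ (c3.1 = c1.1 - 1 ∧ c3.2 = c1.2 - 1)) ∨
        ((c4.1 = c1.1 ∧ c4.2 = c1.2) ∨ (c4.1 = c1.1 - 1 ∧ c4.2 = c1.2 - 1)) := by
      rcases q1 with h|h|h
      · exact Or.inl (hmem_b1 he1 he2 h)
      · exact Or.inr (Or.inl (hmem_b1 he1 he3 h))
      · exact Or.inr (Or.inr (hmem_b1 he1 he4 h))
    have r2 : ((c2.1 = c1.1 ∧ c2.2 = c1.2) ∨ (c2.1 = c1.1 + 1 ∧ c2.2 = c1.2 - 1)) ∨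
        ((c3.1 = c1.1 ∧ c3.2 = c1.2) ∨ (c3.1 = c1.1 + 1 ∧ c3.2 = c1.2 - 1)) ∨
        ((c4.1 = c1.1 ∧ c4.2 = c1.2) ∨ (c4.1 = c1.1 + 1 ∧ c4.2 = c1.2 - 1)) := by
      rcases q2 with h|h|h
      · exact Or.inl (hmem_b2 he1 he2 h)
      · exact Or.inr (Or.inl (hmem_b2 he1 he3 h))
      · exact Or.inr (Or.inr (hmem_b2 he1 he4 h))
    have r3 : ((c2.1 = c1.1 ∧ c2.2 = c1.2) ∨ (c2.1 = c1.1 - 1 ∧ c2.2 = c1.2 + 1)) ∨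
        ((c3.1 = c1.1 ∧ c3.2 = c1.2) ∨ (c3.1 = c1.1 - 1 ∧ c3.2 = c1.2 + 1)) ∨
        ((c4.1 = c1.1 ∧ c4.2 = c1.2) ∨ (c4.1 = c1.1 - 1 ∧ c4.2 = c1.2 + 1)) := by
      rcases q3 with h|h|h
      · exact Or.inl (hmem_t1 he1 he2 h)
      · exact Or.inr (Or.inl (hmem_t1 he1 he3 h))
      · exact Or.inr (Or.inr (hmem_t1 he1 he4 h))
    have r4 : ((c2.1 = c1.1 ∧ c2.2 = c1.2) ∨ (c2.1 = c1.1 + 1 ∧ c2.2 = c1.2 + 1)) ∨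
        ((c3.1 = c1.1 ∧ c3.2 = c1.2) ∨ (c3.1 = c1.1 + 1 ∧ c3.2 = c1.2 + 1)) ∨
        ((c4.1 = c1.1 ∧ c4.2 = c1.2) ∨ (c4.1 = c1.1 + 1 ∧ c4.2 = c1.2 + 1)) := by
      rcases q4 with h|h|h
      · exact Or.inl (hmem_t2 he1 he2 h)
      · exact Or.inr (Or.inl (hmem_t2 he1 he3 h))
      · exact Or.inr (Or.inr (hmem_t2 he1 he4 h))
    have n12 : ¬(c2.1 = c1.1 ∧ c2.2 = c1.2) := fun h =>
      hne12 (Prod.ext_iff.mpr ⟨h.1.symm, h.2.symm⟩)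
    have n13 : ¬(c3.1 = c1.1 ∧ c3.2 = c1.2) := fun h =>
      hne13 (Prod.ext_iff.mpr ⟨h.1.symm, h.2.symm⟩)
    have n14 : ¬(c4.1 = c1.1 ∧ c4.2 = c1.2) := fun h =>
      hne41 (Prod.ext_iff.mpr ⟨h.1, h.2⟩)
    rcases r1 with r1|r1|r1 <;> rcases r2 with r2|r2|r2 <;> rcases r3 with r3|r3|r3 <;>
      rcases r4 with r4|r4|r4 <;> omega
  have hc24 : c2 = c4 := by
    have hE : cellEdges c2 = cellEdges c4 := by
      have h : cellEdges c1 ∆ cellEdges c2 = cellEdges c1 ∆ cellEdges c4 := by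
        rw [key, ← hc13]
      calc cellEdges c2 = cellEdges c1 ∆ (cellEdges c1 ∆ cellEdges c2) :=
            (symmDiff_symmDiff_cancel_left _ _).symm
        _ = cellEdges c4 := by rw [h, symmDiff_symmDiff_cancel_left]
    have m1 : s(((c2.1 : ℤ), (c2.2 : ℤ)), ((c2.1 : ℤ), (c2.2 + 1 : ℤ))) ∈ cellEdges c4 := by
      rw [← hE]; simp only [cellEdges, Set.mem_insert_iff, Set.mem_singleton_iff]; tauto
    have m2 : s(((c2.1 + 2 : ℤ), (c2.2 : ℤ)), ((c2.1 + 2 : ℤ), (c2.2 + 1 : ℤ))) ∈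
        cellEdges c4 := by
      rw [← hE]; simp only [cellEdges, Set.mem_insert_iff, Set.mem_singleton_iff]; tauto
    have o1 := hmem_l he2 he4 m1
    have o2 := hmem_r he2 he4 m2
    have : c4.1 = c2.1 ∧ c4.2 = c2.2 := by omega
    exact (Prod.ext_iff.mpr this).symm
  refine ⟨hc13, hc24, ?_⟩
  by_contra hvne
  obtain ⟨v, hv1, hv2⟩ := Set.nonempty_iff_ne_empty.mpr hvne
  have final : ∀ e₀ : Sym2 V2, cellEdges c2 ∩ cellEdges c1 = {e₀} → False := by
    intro e₀ hinter
    have hm3 : M3.val = M2.val ∆ cellEdges c2 := by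
      rw [← h23, symmDiff_symmDiff_cancel_left]
    have hcap : M3.val ∩ cellEdges c1 = (M2.val ∩ cellEdges c1) ∆ {e₀} := by
      rw [hm3, symmDiff_inter, hinter]
    have h34' : M3.val ∆ M4.val = cellEdges c1 := by rw [h34, ← hc13]
    have p12 := pmhex M1 M2 h12
    have p34 := pmhex M3 M4 h34'
    have hsing : ∀ X : Set (Sym2 V2), X ∆ {e₀} ≠ X := by
      intro X h
      have h2 : ({e₀} : Set (Sym2 V2)) = ⊥ := symmDiff_eq_left.mp h
      exact Set.singleton_ne_empty e₀ h2
    have MBA : MB c1 ∆ MA c1 ≠ {e₀} := fun h =>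
      MA_symmDiff_MB_ne c1 e₀ (by rw [symmDiff_comm] at h; exact h)
    rcases p12 with ⟨_, hA2⟩ | ⟨_, hA2⟩ <;> rcases p34 with ⟨hA3, _⟩ | ⟨hA3, _⟩ <;>
        rw [hA2] at hcap <;> rw [hA3] at hcap <;>
      first
        | exact hsing _ hcap.symm
        | exact MA_symmDiff_MB_ne c1 e₀ (by rw [hcap, symmDiff_symmDiff_cancel_left])
        | exact MBA (by rw [hcap, symmDiff_symmDiff_cancel_left])
  rcases vert_offset he1 he2 hv1 hv2 with h|h|h|h|h|h|h
  · exact hne12 (Prod.ext_iff.mpr ⟨h.1.symm, h.2.symm⟩)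
  · have hc2 : c2 = ((c1.1 + 2 : ℤ), (c1.2 : ℤ)) := Prod.ext_iff.mpr ⟨h.1, h.2⟩
    subst hc2
    exact final _ (inter_r c1)
  · have hc2 : c2 = ((c1.1 - 2 : ℤ), (c1.2 : ℤ)) := Prod.ext_iff.mpr ⟨h.1, h.2⟩
    subst hc2
    exact final _ (inter_l c1)
  · have hc2 : c2 = ((c1.1 + 1 : ℤ), (c1.2 + 1 : ℤ)) := Prod.ext_iff.mpr ⟨h.1, h.2⟩
    subst hc2
    exact final _ (inter_ur c1)
  · have hc2 : c2 = ((c1.1 + 1 : ℤ), (c1.2 - 1 : ℤ)) := Prod.ext_iff.mpr ⟨h.1, h.2⟩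
    subst hc2
    exact final _ (inter_dr c1)
  · have hc2 : c2 = ((c1.1 - 1 : ℤ), (c1.2 + 1 : ℤ)) := Prod.ext_iff.mpr ⟨h.1, h.2⟩
    subst hc2
    exact final _ (inter_ul c1)
  · have hc2 : c2 = ((c1.1 - 1 : ℤ), (c1.2 - 1 : ℤ)) := Prod.ext_iff.mpr ⟨h.1, h.2⟩
    subst hc2
    exact final _ (inter_dl c1)


/-! ### Tuples in `Q_{k,l}` -/

def tup (k : ℕ) {l : ℕ} (i j : Fin l) (a b : Fin 3) : (Fin k → Fin 2) × (Fin l → Fin 3) :=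
  (fun _ => 0, fun m => if m = i then a else if m = j then b else 0)

lemma tup_adj_fst {k l : ℕ} {i j : Fin l} (hij : i ≠ j) {a a' : Fin 3} (b : Fin 3)
    (h : (a : ℕ) = (a' : ℕ) + 1 ∨ (a' : ℕ) = (a : ℕ) + 1) :
    (tupleGraph k l).Adj (tup k i j a b) (tup k i j a' b) := by
  refine Or.inr ⟨i, ?_, ?_, rfl⟩
  · simpa [tup] using h
  · intro m hm
    simp only [tup, if_neg hm]

lemma tup_adj_snd {k l : ℕ} {i j : Fin l} (hij : i ≠ j) (a : Fin 3) {b b' : Fin 3}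
    (h : (b : ℕ) = (b' : ℕ) + 1 ∨ (b' : ℕ) = (b : ℕ) + 1) :
    (tupleGraph k l).Adj (tup k i j a b) (tup k i j a b') := by
  refine Or.inr ⟨j, ?_, ?_, rfl⟩
  · simpa [tup, Ne.symm hij] using h
  · intro m hm
    by_cases h2 : m = i
    · simp only [tup, if_pos h2]
    · simp only [tup, if_neg h2, if_neg hm]

lemma tup_inj {k l : ℕ} {i j : Fin l} (hij : i ≠ j) {a b a' b' : Fin 3}
    (h : tup k i j a b = tup k i j a' b') : a = a' ∧ b = b' := by
  have h2 := congrArg Prod.snd h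
  constructor
  · have := congrFun h2 i
    simpa [tup] using this
  · have := congrFun h2 j
    simpa [tup, Ne.symm hij] using this

/-- **Claim 4.** With `hᵢ'` the hexagon of `G` satisfying `Nⁱ ⊕ Oⁱ = E(hᵢ')`
for `i ∈ {k+1, …, k+l}` (where `Nⁱ`, `Oⁱ` are the vertices of the induced convex subgraph
`Q ≅ Q_{k,l}` of the resonance graph with `1`, resp. `2`, in position `i` and `0`
elsewhere), the hexagons `hᵢ'` are pairwise vertex-disjoint. -/
theorem hexagon_primes_pairwise_disjoint (B : Set V2) (hB : IsBenzenoid B)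
    (hex : ∃ M, IsPM cellVerts cellEdges B M) (k l : ℕ)
    (S : Set (PM cellVerts cellEdges B))
    (hconv : IsConvex (resGraph cellVerts cellEdges B) S)
    (φ : tupleGraph k l ≃g (resGraph cellVerts cellEdges B).induce S)
    (h' : Fin l → V2) (hh'B : ∀ i, h' i ∈ B)
    (hhex' : ∀ i : Fin l,
      (φ (fun _ => 0, fun j => if j = i then 1 else 0)).val.val ∆
        (φ (fun _ => 0, fun j => if j = i then 2 else 0)).val.val = cellEdges (h' i)) :
    ∀ i j : Fin l, i ≠ j → cellVerts (h' i) ∩ cellVerts (h' j) = ∅ := by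
  intro i j hij
  have hpar : ∀ c ∈ B, Even (c.1 + c.2) := hB.2.2.1
  have adj : ∀ p q, (tupleGraph k l).Adj p q →
      ∃ c ∈ B, ((φ p).val.val ∆ (φ q).val.val) = cellEdges c := by
    intro p q h
    have h2 : (resGraph cellVerts cellEdges B).Adj (φ p).val (φ q).val :=
      φ.map_rel_iff.mpr h
    exact h2.2
  have inj : ∀ p q : (Fin k → Fin 2) × (Fin l → Fin 3), p ≠ q → (φ p).val ≠ (φ q).val := by
    intro p q hpq h
    exact hpq (φ.toEquiv.injective (Subtype.ext h))
  have ne_ab : ∀ {a b a' b' : Fin 3}, (a ≠ a' ∨ b ≠ b') →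
      tup k i j a b ≠ tup k i j a' b' := by
    intro a b a' b' h heq
    rcases tup_inj hij heq with ⟨h1, h2⟩
    rcases h with h | h
    · exact h h1
    · exact h h2
  have etup : ∀ a : Fin 3, tup k i j a 0 =
      ((fun _ => 0 : Fin k → Fin 2), fun j' => if j' = i then a else 0) := by
    intro a
    refine Prod.ext_iff.mpr ⟨rfl, funext fun m => ?_⟩
    by_cases h : m = i
    · simp [tup, h]
    · simp [tup, h]
  have etup' : ∀ b : Fin 3, tup k i j 0 b =
      ((fun _ => 0 : Fin k → Fin 2), fun j' => if j' = j then b else 0) := by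
    intro b
    refine Prod.ext_iff.mpr ⟨rfl, funext fun m => ?_⟩
    by_cases h1 : m = i
    · subst h1
      simp [tup, hij]
    · by_cases h2 : m = j <;> simp [tup, h1, h2, Ne.symm hij]
  have hdi : ((φ (tup k i j 1 0)).val.val ∆ (φ (tup k i j 2 0)).val.val) =
      cellEdges (h' i) := by
    rw [etup 1, etup 2]
    exact hhex' i
  have hdj : ((φ (tup k i j 0 1)).val.val ∆ (φ (tup k i j 0 2)).val.val) =
      cellEdges (h' j) := by
    rw [etup' 1, etup' 2]
    exact hhex' j
  -- Square S1 : (0,1) (0,2) (1,2) (1,1); the hexagon of edge (1,2)-(1,1) is h' j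
  obtain ⟨ca, hcaB, hda⟩ := adj _ _ (tup_adj_fst (k := k) hij (a := 0) (a' := 1) 2 (by decide))
  obtain ⟨cb, hcbB, hdb⟩ := adj _ _ (tup_adj_snd (k := k) hij 1 (b := 2) (b' := 1) (by decide))
  obtain ⟨cc, hccB, hdc⟩ := adj _ _ (tup_adj_fst (k := k) hij (a := 1) (a' := 0) 1 (by decide))
  obtain ⟨hS1, -, -⟩ :=
    square (hpar _ (hh'B j)) (hpar _ hcaB) (hpar _ hcbB) (hpar _ hccB) hdj hda hdb hdc
      (inj (tup k i j 0 1) (tup k i j 1 2) (ne_ab (Or.inl (by decide))))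
      (inj (tup k i j 0 2) (tup k i j 1 1) (ne_ab (Or.inl (by decide))))
  have hdb' : ((φ (tup k i j 1 2)).val.val ∆ (φ (tup k i j 1 1)).val.val) =
      cellEdges (h' j) := by rw [hdb, ← hS1]
  -- Square S2 : (1,0) (2,0) (2,1) (1,1); the hexagon of edge (2,1)-(1,1) is h' i
  obtain ⟨cd, hcdB, hdd⟩ := adj _ _ (tup_adj_snd (k := k) hij 2 (b := 0) (b' := 1) (by decide))
  obtain ⟨ce, hceB, hde⟩ := adj _ _ (tup_adj_fst (k := k) hij (a := 2) (a' := 1) 1 (by decide))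
  obtain ⟨cf, hcfB, hdf⟩ := adj _ _ (tup_adj_snd (k := k) hij 1 (b := 1) (b' := 0) (by decide))
  obtain ⟨hS2, -, -⟩ :=
    square (hpar _ (hh'B i)) (hpar _ hcdB) (hpar _ hceB) (hpar _ hcfB) hdi hdd hde hdf
      (inj (tup k i j 1 0) (tup k i j 2 1) (ne_ab (Or.inl (by decide))))
      (inj (tup k i j 2 0) (tup k i j 1 1) (ne_ab (Or.inl (by decide))))
  have hde' : ((φ (tup k i j 1 1)).val.val ∆ (φ (tup k i j 2 1)).val.val) =
      cellEdges (h' i) := by rw [symmDiff_comm, hde, ← hS2]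
  -- Square S3 : (1,1) (2,1) (2,2) (1,2)
  obtain ⟨cg, hcgB, hdg⟩ := adj _ _ (tup_adj_snd (k := k) hij 2 (b := 1) (b' := 2) (by decide))
  obtain ⟨ch, hchB, hdh⟩ := adj _ _ (tup_adj_fst (k := k) hij (a := 2) (a' := 1) 2 (by decide))
  obtain ⟨-, hS3, hdisj⟩ :=
    square (hpar _ (hh'B i)) (hpar _ hcgB) (hpar _ hchB) (hpar _ (hh'B j)) hde' hdg hdh hdb'
      (inj (tup k i j 1 1) (tup k i j 2 2) (ne_ab (Or.inl (by decide))))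
      (inj (tup k i j 2 1) (tup k i j 1 2) (ne_ab (Or.inl (by decide))))
  rw [hS3] at hdisj
  exact hdisj

end GZZ
end
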